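/- Let B be a C*-algebra, let E be a C*-module over B (a normed ℂ-vector space with a B-valued inner product ⟪·,·⟫ satisfying the CStarModule axioms, in particular ‖x‖² = ‖⟪x,x⟫‖ and the Cauchy–Schwarz inequality ‖⟪x,y⟫‖ ≤ ‖x‖·‖y‖), and let β, β' : B → B be maps with ‖β b‖ ≤ ‖b‖ and ‖β' b‖ ≤ ‖b‖ for all b ∈ B. Let U, V : E →ₗ[ℂ] E be linear maps satisfying U ∘ V ∘ U = U, V ∘ U ∘ V = V, ⟪U x, y⟫ = β(⟪x, V y⟫) and ⟪V x, y⟫ = β'(⟪x, U y⟫) for all x, y ∈ E. Then ‖U x‖ ≤ ‖x‖ and ‖V x‖ ≤ ‖x‖ for all x ∈ E; in particular U and V are bounded linear operators of norm at most 1. -/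

import Mathlib

/-- The Hilbert C⋆-module class as it stood in Mathlib of December 2024 (right `Aᵐᵒᵖ`-action,
inner product `A`-linear on the right); Mathlib's `CStarModule` now uses a left action. -/
class CStarModuleOld (A E : Type*) [NonUnitalSemiring A] [StarRing A]
    [Module ℂ A] [AddCommGroup E] [Module ℂ E] [PartialOrder A] [SMul Aᵐᵒᵖ E] [Norm A] [Norm E]
    extends Inner A E where
  inner_add_right {x} {y} {z} : inner x (y + z) = inner x y + inner x z
  inner_self_nonneg {x} : 0 ≤ inner x x
  inner_self {x} : inner x x = 0 ↔ x = 0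
  inner_op_smul_right {a : A} {x y : E} : inner x (MulOpposite.op a • y) = inner x y * a
  inner_smul_right_complex {z : ℂ} {x} {y} : inner x (z • y) = z • inner x y
  star_inner x y : star (inner x y) = inner y x
  norm_eq_sqrt_norm_inner_self x : ‖x‖ = √‖inner x x‖

namespace CStarModuleOld

section helpers

variable {A E : Type*} [NonUnitalCStarAlgebra A] [PartialOrder A] [StarOrderedRing A]
  [AddCommGroup E] [Module ℂ E] [SMul Aᵐᵒᵖ E] [Norm E] [CStarModuleOld A E]

lemma o_inner_add_left {x y z : E} : inner A (x + y) z = inner A x z + inner A y z := by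
  rw [← CStarModuleOld.star_inner z (x + y), CStarModuleOld.inner_add_right, star_add,
    CStarModuleOld.star_inner, CStarModuleOld.star_inner]

noncomputable def oInnerR (x : E) : E →+ A :=
  AddMonoidHom.mk' (fun y => inner A x y) (fun _ _ => CStarModuleOld.inner_add_right)

noncomputable def oInnerL (y : E) : E →+ A :=
  AddMonoidHom.mk' (fun x => inner A x y) (fun _ _ => o_inner_add_left)

lemma o_inner_sub_right {x y z : E} : inner A x (y - z) = inner A x y - inner A x z :=
  map_sub (oInnerR (A := A) x) y z

lemma o_inner_sub_left {x y z : E} : inner A (x - y) z = inner A x z - inner A y z :=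
  map_sub (oInnerL (A := A) z) x y

lemma o_inner_zero_left {x : E} : inner A (0 : E) x = 0 :=
  map_zero (oInnerL (A := A) x)

lemma o_inner_smul_right_real {z : ℝ} {x y : E} : inner A x (z • y) = z • inner A x y := by
  have h₁ : z • y = (z : ℂ) • y := by simp
  rw [h₁, CStarModuleOld.inner_smul_right_complex]
  exact Complex.coe_smul z _

lemma o_inner_smul_left_real {z : ℝ} {x y : E} : inner A (z • x) y = z • inner A x y := by
  rw [← CStarModuleOld.star_inner y, o_inner_smul_right_real, star_smul, star_trivial,
    CStarModuleOld.star_inner]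

lemma o_inner_op_smul_left {a : A} {x y : E} :
    inner A (MulOpposite.op a • x) y = star a * inner A x y := by
  rw [← CStarModuleOld.star_inner y, CStarModuleOld.inner_op_smul_right, star_mul,
    CStarModuleOld.star_inner]

lemma o_norm_sq_eq {x : E} : ‖x‖ ^ 2 = ‖inner A x x‖ := by
  rw [CStarModuleOld.norm_eq_sqrt_norm_inner_self (A := A), Real.sq_sqrt (norm_nonneg _)]

lemma o_norm_nonneg (A : Type*) {E : Type*} [NonUnitalCStarAlgebra A] [PartialOrder A]
    [AddCommGroup E] [Module ℂ E] [SMul Aᵐᵒᵖ E] [Norm E] [CStarModuleOld A E] {x : E} : 0 ≤ ‖x‖ := by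
  rw [CStarModuleOld.norm_eq_sqrt_norm_inner_self (A := A)]
  exact Real.sqrt_nonneg _

lemma o_norm_pos (A : Type*) {E : Type*} [NonUnitalCStarAlgebra A] [PartialOrder A]
    [AddCommGroup E] [Module ℂ E] [SMul Aᵐᵒᵖ E] [Norm E] [CStarModuleOld A E] {x : E} (hx : x ≠ 0) : 0 < ‖x‖ := by
  rw [CStarModuleOld.norm_eq_sqrt_norm_inner_self (A := A), Real.sqrt_pos, norm_pos_iff]
  intro H
  rw [CStarModuleOld.inner_self] at H
  exact hx H

lemma o_inner_mul_inner_swap_le {x y : E} :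
    inner A y x * inner A x y ≤ ‖x‖ ^ 2 • inner A y y := by
  rcases eq_or_ne x 0 with h | h
  · subst h
    rw [o_inner_zero_left, mul_zero, CStarModuleOld.norm_eq_sqrt_norm_inner_self (A := A),
      o_inner_zero_left]
    simp
  · have h₁ : ∀ (a : A),
        (0 : A) ≤ ‖x‖ ^ 2 • (star a * a) - ‖x‖ ^ 2 • (star a * inner A x y)
                  - ‖x‖ ^ 2 • (inner A y x * a) + ‖x‖ ^ 2 • (‖x‖ ^ 2 • inner A y y) := fun a => by
      calc (0 : A) ≤ inner A (MulOpposite.op a • x - ‖x‖ ^ 2 • y)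
              (MulOpposite.op a • x - ‖x‖ ^ 2 • y) := by
                      exact CStarModuleOld.inner_self_nonneg
            _ = star a * inner A x x * a - ‖x‖ ^ 2 • (star a * inner A x y)
                  - ‖x‖ ^ 2 • (inner A y x * a) + ‖x‖ ^ 2 • (‖x‖ ^ 2 • inner A y y) := by
                      simp only [o_inner_sub_right, CStarModuleOld.inner_op_smul_right,
                        o_inner_sub_left, o_inner_op_smul_left, o_inner_smul_left_real,
                        mul_sub, sub_mul, smul_mul_assoc, mul_smul_comm,
                        o_inner_smul_right_real, smul_sub, mul_assoc]
                      abel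
            _ ≤ ‖x‖ ^ 2 • (star a * a) - ‖x‖ ^ 2 • (star a * inner A x y)
                  - ‖x‖ ^ 2 • (inner A y x * a) + ‖x‖ ^ 2 • (‖x‖ ^ 2 • inner A y y) := by
                      gcongr
                      calc _ ≤ ‖inner A x x‖ • (star a * a) :=
                          CStarAlgebra.star_left_conjugate_le_norm_smul (hb := CStarModuleOld.star_inner x x)
                        _ = ‖x‖ ^ 2 • (star a * a) := by rw [o_norm_sq_eq (A := A)]
    specialize h₁ (inner A x y)
    simp only [CStarModuleOld.star_inner, sub_self, zero_sub, le_neg_add_iff_add_le,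
      add_zero] at h₁
    rwa [smul_le_smul_iff_of_pos_left (pow_pos (o_norm_pos A h) _)] at h₁

lemma o_norm_inner_le {x y : E} : ‖inner A x y‖ ≤ ‖x‖ * ‖y‖ := by
  have := calc ‖inner A x y‖ ^ 2 = ‖inner A y x * inner A x y‖ := by
                rw [← CStarModuleOld.star_inner x, CStarRing.norm_star_mul_self, pow_two]
    _ ≤ ‖‖x‖ ^ 2 • inner A y y‖ := by
                refine CStarAlgebra.norm_le_norm_of_nonneg_of_le ?_ o_inner_mul_inner_swap_le
                rw [← CStarModuleOld.star_inner x]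
                exact star_mul_self_nonneg _
    _ = ‖x‖ ^ 2 * ‖inner A y y‖ := by simp [norm_smul]
    _ = ‖x‖ ^ 2 * ‖y‖ ^ 2 := by rw [o_norm_sq_eq (A := A) (x := y)]
    _ = (‖x‖ * ‖y‖) ^ 2 := by simp only [mul_pow]
  refine (pow_le_pow_iff_left₀ (norm_nonneg _) ?_ (by simp)).mp this
  exact mul_nonneg (o_norm_nonneg A) (o_norm_nonneg A)

end helpers

end CStarModuleOld

/-- Boundedness of the operators of an action on a Hilbert C*-module: if `U`, `V` are linear
maps on a C*-module `E` over `B` with `UVU = U`, `VUV = V`, and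
`⟪U x, y⟫ = β ⟪x, V y⟫`, `⟪V x, y⟫ = β' ⟪x, U y⟫` for norm-nonincreasing maps `β`, `β'` on `B`,
then `U` and `V` are contractions. -/
theorem stmt15 {B E : Type*} [NonUnitalCStarAlgebra B] [PartialOrder B] [StarOrderedRing B]
    [AddCommGroup E] [Module ℂ E] [SMul Bᵐᵒᵖ E] [Norm E] [CStarModuleOld B E]
    (β β' : B → B) (hβ : ∀ b, ‖β b‖ ≤ ‖b‖) (hβ' : ∀ b, ‖β' b‖ ≤ ‖b‖)
    (U V : E →ₗ[ℂ] E)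
    (hUVU : U ∘ₗ V ∘ₗ U = U) (hVUV : V ∘ₗ U ∘ₗ V = V)
    (hUadj : ∀ x y : E, (inner B (U x) y : B) = β (inner B x (V y)))
    (hVadj : ∀ x y : E, (inner B (V x) y : B) = β' (inner B x (U y))) :
    (∀ x : E, ‖U x‖ ≤ ‖x‖) ∧ (∀ x : E, ‖V x‖ ≤ ‖x‖) := by
  have hUVUx : ∀ x : E, U (V (U x)) = U x := fun x => LinearMap.congr_fun hUVU x
  have hVUVx : ∀ x : E, V (U (V x)) = V x := fun x => LinearMap.congr_fun hVUV x
  -- key square estimates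
  have hU2 : ∀ x : E, ‖U x‖ ^ 2 ≤ ‖x‖ * ‖V (U x)‖ := by
    intro x
    calc ‖U x‖ ^ 2 = ‖(inner B (U x) (U x) : B)‖ := CStarModuleOld.o_norm_sq_eq (A := B)
      _ = ‖β (inner B x (V (U x)))‖ := by rw [hUadj]
      _ ≤ ‖(inner B x (V (U x)) : B)‖ := hβ _
      _ ≤ ‖x‖ * ‖V (U x)‖ := CStarModuleOld.o_norm_inner_le
  have hV2 : ∀ x : E, ‖V x‖ ^ 2 ≤ ‖x‖ * ‖U (V x)‖ := by
    intro x
    calc ‖V x‖ ^ 2 = ‖(inner B (V x) (V x) : B)‖ := CStarModuleOld.o_norm_sq_eq (A := B)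
      _ = ‖β' (inner B x (U (V x)))‖ := by rw [hVadj]
      _ ≤ ‖(inner B x (U (V x)) : B)‖ := hβ' _
      _ ≤ ‖x‖ * ‖U (V x)‖ := CStarModuleOld.o_norm_inner_le
  have key : ∀ (W W' : E →ₗ[ℂ] E),
      (∀ x : E, ‖W x‖ ^ 2 ≤ ‖x‖ * ‖W' (W x)‖) →
      (∀ x : E, ‖W' x‖ ^ 2 ≤ ‖x‖ * ‖W (W' x)‖) →
      (∀ x : E, W (W' (W x)) = W x) →
      ∀ x : E, ‖W x‖ ≤ ‖x‖ := by
    intro W W' h1 h2 h3 x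
    have hWW : ‖W' (W x)‖ ≤ ‖W x‖ := by
      have := h2 (W x)
      rw [h3 x] at this
      nlinarith [CStarModuleOld.o_norm_nonneg (A := B) (x := W' (W x)), CStarModuleOld.o_norm_nonneg (A := B) (x := W x)]
    have := h1 x
    nlinarith [CStarModuleOld.o_norm_nonneg (A := B) (x := W x), CStarModuleOld.o_norm_nonneg (A := B) (x := x),
      mul_le_mul_of_nonneg_left hWW (CStarModuleOld.o_norm_nonneg (A := B) (x := x))]
  exact ⟨key U V hU2 hV2 hUVUx, key V U hV2 hU2 hVUVx⟩
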